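/- In the setting of dual bases (eₖ), (eₖ') with G⁻¹ = -c² e₀'e₀'ᵀ + Σᵢ eᵢ'eᵢ'ᵀ: let v ∈ ℝ⁴ satisfy e₀' ⬝ v = 1 and ‖v‖_W < c, where ‖v‖_W² = Σ_{i=1}^{3}(eᵢ' ⬝ v)². Define γ_v := (1 - ‖v‖_W²/c²)^{-1/2} and u := γ_v • v. Then u ⬝ (G⁻¹ u) = -c². -/
import Mathlib


open Matrix Finset

noncomputable def spaceNorm (e' : Fin 4 → Fin 4 → ℝ) (w : Fin 4 → ℝ) : ℝ :=
  Real.sqrt (∑ i ∈ Finset.univ.filter (fun i : Fin 4 => i ≠ 0), (e' i ⬝ᵥ w) ^ 2)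

lemma quad_vecMulVec (a v : Fin 4 → ℝ) :
    v ⬝ᵥ (vecMulVec a a).mulVec v = (a ⬝ᵥ v) ^ 2 := by
  simp [vecMulVec, Matrix.mulVec, dotProduct, Finset.mul_sum, Finset.sum_mul, sq,
    Fin.sum_univ_four]
  ring

theorem stmt8 (c : ℝ) (hc : 0 < c)
    (e e' : Fin 4 → Fin 4 → ℝ)
    (hbasis : LinearIndependent ℝ e)
    (hdual : ∀ k l, e' k ⬝ᵥ e l = if k = l then (1 : ℝ) else 0)
    (Ginv : Matrix (Fin 4) (Fin 4) ℝ)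
    (hGinv : Ginv = ∑ k : Fin 4,
      (if k = 0 then -c ^ 2 else 1) • vecMulVec (e' k) (e' k))
    (v : Fin 4 → ℝ)
    (hv0 : e' 0 ⬝ᵥ v = 1) (hvc : spaceNorm e' v < c) :
    ((1 / Real.sqrt (1 - (spaceNorm e' v) ^ 2 / c ^ 2)) • v) ⬝ᵥ
      Ginv.mulVec ((1 / Real.sqrt (1 - (spaceNorm e' v) ^ 2 / c ^ 2)) • v)
    = -c ^ 2 := by
  set s := spaceNorm e' v with hs
  have hsnn : 0 ≤ s := Real.sqrt_nonneg _
  have hS : s ^ 2 = ∑ i ∈ Finset.univ.filter (fun i : Fin 4 => i ≠ 0), (e' i ⬝ᵥ v) ^ 2 := by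
    rw [hs, spaceNorm, Real.sq_sqrt]
    positivity
  have hS' : s ^ 2 = (e' 1 ⬝ᵥ v) ^ 2 + (e' 2 ⬝ᵥ v) ^ 2 + (e' 3 ⬝ᵥ v) ^ 2 := by
    rw [hS, Finset.sum_filter, Fin.sum_univ_four]
    simp
  have hquad : v ⬝ᵥ Ginv.mulVec v = s ^ 2 - c ^ 2 := by
    subst hGinv
    rw [Fin.sum_univ_four]
    simp only [Matrix.add_mulVec, dotProduct_add, Matrix.smul_mulVec,
      dotProduct_smul, quad_vecMulVec, hv0]
    norm_num
    rw [if_neg (show (2 : Fin 4) ≠ 0 by decide), if_neg (show (3 : Fin 4) ≠ 0 by decide)]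
    linarith [hS']
  have hs2 : s ^ 2 < c ^ 2 := by
    apply pow_lt_pow_left₀ hvc hsnn
    norm_num
  have hx : 0 < 1 - s ^ 2 / c ^ 2 := by
    have : s ^ 2 / c ^ 2 < 1 := (div_lt_one (by positivity)).2 hs2
    linarith
  have hsq : Real.sqrt (1 - s ^ 2 / c ^ 2) ^ 2 = 1 - s ^ 2 / c ^ 2 := Real.sq_sqrt hx.le
  have hsqpos : 0 < Real.sqrt (1 - s ^ 2 / c ^ 2) := Real.sqrt_pos.2 hx
  have key : (1 - s ^ 2 / c ^ 2)⁻¹ * (s ^ 2 - c ^ 2) = -c ^ 2 := by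
    rw [inv_mul_eq_div, div_eq_iff hx.ne']
    field_simp
    ring
  rw [smul_dotProduct, Matrix.mulVec_smul, dotProduct_smul, hquad, smul_eq_mul, smul_eq_mul,
    ← mul_assoc, div_mul_div_comm, one_mul, Real.mul_self_sqrt hx.le, one_div, key]
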